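/- Nash equilibria with fully supported Host strategy avoid Notswitch (Theorem): let H : Fin 12 → Fin 6 → ℝ be any Host payoff matrix and let (P', Q') be a Nash equilibrium of the bimatrix game (C, H). If Q' is fully supported (Q' j > 0 for all j ∈ Fin 6), then P' i = 0 for every i ∉ {0, 4, 8}; that is, P' is a mixture of the always-switch strategies 1SS, 2SS, 3SS. -/

import Mathlib

open Finset

/-- Contestant's payoff matrix for the Monty Hall zero-sum game.
Rows: 1SS,1SN,1NS,1NN,2SS,2SN,2NS,2NN,3SS,3SN,3NS,3NN.
Columns: 1L,1R,2L,2R,3L,3R. -/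
def C : Fin 12 → Fin 6 → ℝ :=
  ![![0,0,1,1,1,1],
    ![0,1,0,0,1,1],
    ![1,0,1,1,0,0],
    ![1,1,0,0,0,0],
    ![1,1,0,0,1,1],
    ![0,0,0,1,1,1],
    ![1,1,1,0,0,0],
    ![0,0,1,1,0,0],
    ![1,1,1,1,0,0],
    ![0,0,1,1,0,1],
    ![1,1,0,0,1,0],
    ![0,0,0,0,1,1]]

/-- A mixed strategy for Contestant. -/
def IsMixedC (P : Fin 12 → ℝ) : Prop := (∀ i, 0 ≤ P i) ∧ ∑ i, P i = 1

/-- A mixed strategy for Host. -/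
def IsMixedH (Q : Fin 6 → ℝ) : Prop := (∀ j, 0 ≤ Q j) ∧ ∑ j, Q j = 1

/-- Expected payoff (Contestant's winning probability) under profile (P,Q). -/
def E (P : Fin 12 → ℝ) (Q : Fin 6 → ℝ) : ℝ := ∑ i, ∑ j, P i * C i j * Q j
/-- Expected payoff for payoff matrix M under profile (P,Q). -/
def EM (M : Fin 12 → Fin 6 → ℝ) (P : Fin 12 → ℝ) (Q : Fin 6 → ℝ) : ℝ :=
  ∑ i, ∑ j, P i * M i j * Q j

/-- Nash equilibrium of the bimatrix game (C, H). -/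
def IsNash (H : Fin 12 → Fin 6 → ℝ) (P' : Fin 12 → ℝ) (Q' : Fin 6 → ℝ) : Prop :=
  IsMixedC P' ∧ IsMixedH Q' ∧
    (∀ P, IsMixedC P → EM C P' Q' ≥ EM C P Q') ∧
    (∀ Q, IsMixedH Q → EM H P' Q' ≥ EM H P' Q)

/-- In any Nash equilibrium of the bimatrix game (C, H) in which Host's
strategy is fully supported, Contestant mixes only the always-switch
strategies 1SS, 2SS, 3SS (rows 0, 4, 8). -/
lemma vec6_five (a b c d e f : ℝ) : ![a,b,c,d,e,f] 5 = f := rfl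

lemma vec6_two (a b c d e f : ℝ) : ![a,b,c,d,e,f] 2 = c := rfl

lemma vec6_three (a b c d e f : ℝ) : ![a,b,c,d,e,f] 3 = d := rfl

lemma vec6_four (a b c d e f : ℝ) : ![a,b,c,d,e,f] 4 = e := rfl

theorem nash_fully_supported_always_switch :
    ∀ (H : Fin 12 → Fin 6 → ℝ) (P' : Fin 12 → ℝ) (Q' : Fin 6 → ℝ),
      IsNash H P' Q' → (∀ j : Fin 6, Q' j > 0) →
      ∀ i : Fin 12, i ∉ ({0, 4, 8} : Set (Fin 12)) → P' i = 0 := by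
  intro H P' Q' hN hQ i hi
  obtain ⟨⟨hPnn, hPsum⟩, ⟨hQnn, hQsum⟩, hbest, -⟩ := hN
  set r : Fin 12 → ℝ := fun k => ∑ j, C k j * Q' j with hr
  have hE : ∀ P : Fin 12 → ℝ, EM C P Q' = ∑ k, P k * r k := by
    intro P
    unfold EM
    refine Finset.sum_congr rfl fun k _ => ?_
    rw [hr, Finset.mul_sum]
    exact Finset.sum_congr rfl fun j _ => by ring
  have hpure : ∀ k, EM C P' Q' ≥ r k := by
    intro k
    have hm : IsMixedC (fun i => if i = k then (1:ℝ) else 0) := by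
      constructor
      · intro i; by_cases h : i = k <;> simp [h]
      · simp
    have h := hbest _ hm
    have h2 : EM C (fun i => if i = k then (1:ℝ) else 0) Q' = r k := by
      rw [hE]; simp [ite_mul]
    rw [← h2]; exact h
  set V := EM C P' Q' with hV
  have hVsum : V = ∑ k, P' k * r k := hE P'
  have hzero : ∑ k, P' k * (V - r k) = 0 := by
    have h : ∑ k, P' k * (V - r k) = (∑ k, P' k) * V - ∑ k, P' k * r k := by
      rw [Finset.sum_mul, ← Finset.sum_sub_distrib]
      exact Finset.sum_congr rfl fun k _ => by ring
    rw [h, hPsum, ← hVsum]; ring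
  have hterm : ∀ k, P' k * (V - r k) = 0 := by
    intro k
    refine (Finset.sum_eq_zero_iff_of_nonneg ?_).1 hzero k (Finset.mem_univ k)
    intro j _
    exact mul_nonneg (hPnn j) (sub_nonneg.2 (hpure j))
  have key : ∀ i k : Fin 12, r i < r k → P' i = 0 := by
    intro i k hik
    have h := hterm i
    have hpos : V - r i > 0 := by have := hpure k; linarith
    rcases mul_eq_zero.1 h with h' | h'
    · exact h'
    · linarith
  have e0 : (∑ j, C 0 j * Q' j) = Q' 2 + Q' 3 + Q' 4 + Q' 5 := by
    rw [show C 0 = ![0,0,1,1,1,1] from rfl, Fin.sum_univ_six]; norm_num [vec6_two, vec6_three, vec6_four, vec6_five]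
  have e4 : (∑ j, C 4 j * Q' j) = Q' 0 + Q' 1 + Q' 4 + Q' 5 := by
    rw [show C 4 = ![1,1,0,0,1,1] from rfl, Fin.sum_univ_six]; norm_num [vec6_two, vec6_three, vec6_four, vec6_five]
  have e8 : (∑ j, C 8 j * Q' j) = Q' 0 + Q' 1 + Q' 2 + Q' 3 := by
    rw [show C 8 = ![1,1,1,1,0,0] from rfl, Fin.sum_univ_six]; norm_num [vec6_two, vec6_three, vec6_four, vec6_five]
  fin_cases i <;> simp only [Set.mem_insert_iff, Set.mem_singleton_iff] at hi
  · simp at hi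
  · refine key _ 4 ?_
    simp only [hr]
    show (∑ j, C (1 : Fin 12) j * Q' j) < ∑ j, C 4 j * Q' j
    rw [show C 1 = ![0,1,0,0,1,1] from rfl, Fin.sum_univ_six]
    norm_num [vec6_two, vec6_three, vec6_four, vec6_five]; rw [e4]; linarith [hQ 0]
  · refine key _ 8 ?_
    simp only [hr]
    show (∑ j, C (2 : Fin 12) j * Q' j) < ∑ j, C 8 j * Q' j
    rw [show C 2 = ![1,0,1,1,0,0] from rfl, Fin.sum_univ_six]
    norm_num [vec6_two, vec6_three, vec6_four, vec6_five]; rw [e8]; linarith [hQ 1]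
  · refine key _ 8 ?_
    simp only [hr]
    show (∑ j, C (3 : Fin 12) j * Q' j) < ∑ j, C 8 j * Q' j
    rw [show C 3 = ![1,1,0,0,0,0] from rfl, Fin.sum_univ_six]
    norm_num [vec6_two, vec6_three, vec6_four, vec6_five]; rw [e8]; linarith [hQ 2, hQ 3]
  · simp at hi
  · refine key _ 0 ?_
    simp only [hr]
    show (∑ j, C (5 : Fin 12) j * Q' j) < ∑ j, C 0 j * Q' j
    rw [show C 5 = ![0,0,0,1,1,1] from rfl, Fin.sum_univ_six]
    norm_num [vec6_two, vec6_three, vec6_four, vec6_five]; rw [e0]; linarith [hQ 2]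
  · refine key _ 8 ?_
    simp only [hr]
    show (∑ j, C (6 : Fin 12) j * Q' j) < ∑ j, C 8 j * Q' j
    rw [show C 6 = ![1,1,1,0,0,0] from rfl, Fin.sum_univ_six]
    norm_num [vec6_two, vec6_three, vec6_four, vec6_five]; rw [e8]; linarith [hQ 3]
  · refine key _ 0 ?_
    simp only [hr]
    show (∑ j, C (7 : Fin 12) j * Q' j) < ∑ j, C 0 j * Q' j
    rw [show C 7 = ![0,0,1,1,0,0] from rfl, Fin.sum_univ_six]
    norm_num [vec6_two, vec6_three, vec6_four, vec6_five]; rw [e0]; linarith [hQ 4, hQ 5]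
  · simp at hi
  · refine key _ 0 ?_
    simp only [hr]
    show (∑ j, C (9 : Fin 12) j * Q' j) < ∑ j, C 0 j * Q' j
    rw [show C 9 = ![0,0,1,1,0,1] from rfl, Fin.sum_univ_six]
    norm_num [vec6_two, vec6_three, vec6_four, vec6_five]; rw [e0]; linarith [hQ 4]
  · refine key _ 4 ?_
    simp only [hr]
    show (∑ j, C (10 : Fin 12) j * Q' j) < ∑ j, C 4 j * Q' j
    rw [show C 10 = ![1,1,0,0,1,0] from rfl, Fin.sum_univ_six]
    norm_num [vec6_two, vec6_three, vec6_four, vec6_five]; rw [e4]; linarith [hQ 5]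
  · refine key _ 0 ?_
    simp only [hr]
    show (∑ j, C (11 : Fin 12) j * Q' j) < ∑ j, C 0 j * Q' j
    rw [show C 11 = ![0,0,0,0,1,1] from rfl, Fin.sum_univ_six]
    norm_num [vec6_two, vec6_three, vec6_four, vec6_five]; rw [e0]; linarith [hQ 2, hQ 3]
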